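/- For all integers m, n with 1 ≤ m ≤ n and n ≥ 2, the upper broadcast domination number of the grid satisfies Γ_b(P_m □ P_n) ≥ m·(n − 1). -/

import Mathlib

open SimpleGraph Finset

/-- `S` is a dominating set of `G`: every vertex is in `S` or adjacent to a vertex of `S`. -/
def Dominates {V : Type*} (G : SimpleGraph V) (S : Finset V) : Prop :=
  ∀ v : V, v ∈ S ∨ ∃ u ∈ S, G.Adj v u

/-- `S` is a minimal dominating set: it dominates and no proper subset dominates. -/
def MinimalDominating {V : Type*} (G : SimpleGraph V) (S : Finset V) : Prop :=
  Dominates G S ∧ ∀ S' : Finset V, S' ⊂ S → ¬ Dominates G S'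

/-- The upper domination number `Γ(G)`: maximum cardinality of a minimal dominating set. -/
noncomputable def upperDomination {V : Type*} (G : SimpleGraph V) : ℕ :=
  sSup {k : ℕ | ∃ S : Finset V, MinimalDominating G S ∧ S.card = k}

/-- The domination number `γ(G)`: minimum cardinality of a dominating set. -/
noncomputable def domNumber {V : Type*} (G : SimpleGraph V) : ℕ :=
  sInf {k : ℕ | ∃ S : Finset V, Dominates G S ∧ S.card = k}

/-- The eccentricity of `v` : maximum distance to any other vertex. -/
noncomputable def eccent {V : Type*} [Fintype V] (G : SimpleGraph V) (v : V) : ℕ :=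
  Finset.univ.sup (fun u => G.dist v u)

/-- The diameter of `G` : maximum eccentricity. -/
noncomputable def gDiam {V : Type*} [Fintype V] (G : SimpleGraph V) : ℕ :=
  Finset.univ.sup (fun v => _root_.eccent G v)

/-- A broadcast on `G`: `f v ≤ e(v)` for all `v`. -/
def IsBroadcast {V : Type*} [Fintype V] (G : SimpleGraph V) (f : V → ℕ) : Prop :=
  ∀ v : V, f v ≤ _root_.eccent G v

/-- A broadcast `f` dominates `G` if every vertex hears some broadcasting vertex. -/
def BroadcastDominates {V : Type*} (G : SimpleGraph V) (f : V → ℕ) : Prop :=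
  ∀ u : V, ∃ v : V, 1 ≤ f v ∧ G.dist u v ≤ f v

/-- A minimal dominating broadcast: no broadcast `g ≤ f` with `g ≠ f` dominates `G`. -/
def MinimalDominatingBroadcast {V : Type*} [Fintype V] (G : SimpleGraph V) (f : V → ℕ) : Prop :=
  IsBroadcast G f ∧ BroadcastDominates G f ∧
    ∀ g : V → ℕ, IsBroadcast G g → g ≤ f → g ≠ f → ¬ BroadcastDominates G g

/-- The cost of a broadcast. -/
def cost {V : Type*} [Fintype V] (f : V → ℕ) : ℕ := ∑ v, f v

/-- The upper broadcast domination number `Γ_b(G)`. -/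
noncomputable def upperBroadcast {V : Type*} [Fintype V] (G : SimpleGraph V) : ℕ :=
  sSup {k : ℕ | ∃ f : V → ℕ, MinimalDominatingBroadcast G f ∧ cost f = k}

/-- The broadcast domination number `γ_b(G)`. -/
noncomputable def broadcastDomNumber {V : Type*} [Fintype V] (G : SimpleGraph V) : ℕ :=
  sInf {k : ℕ | ∃ f : V → ℕ, IsBroadcast G f ∧ BroadcastDominates G f ∧ cost f = k}

lemma myPathWalk {n : ℕ} : ∀ (k : ℕ) (a b : Fin n), Nat.dist a.val b.val = k →
    ∃ p : (pathGraph n).Walk a b, p.length = k := by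
  intro k
  induction k with
  | zero =>
    intro a b h
    have : a = b := Fin.ext (Nat.eq_of_dist_eq_zero h)
    subst this
    exact ⟨SimpleGraph.Walk.nil, rfl⟩
  | succ k ih =>
    intro a b h
    have hne : a.val ≠ b.val := by
      intro he; rw [Nat.dist_eq_zero he] at h; omega
    rcases lt_or_gt_of_ne hne with hlt | hgt
    · have hd0 : b.val - a.val = k + 1 := by
        rw [← Nat.dist_eq_sub_of_le hlt.le]; exact h
      have ha1 : a.val + 1 < n := lt_of_le_of_lt hlt b.isLt
      set a' : Fin n := ⟨a.val + 1, ha1⟩ with ha'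
      have hadj : (pathGraph n).Adj a a' := pathGraph_adj.mpr (Or.inl rfl)
      have hd : Nat.dist a'.val b.val = k := by
        have : a'.val ≤ b.val := by simp [ha']; omega
        rw [Nat.dist_eq_sub_of_le this]; simp [ha']; omega
      obtain ⟨p, hp⟩ := ih a' b hd
      exact ⟨SimpleGraph.Walk.cons hadj p, by simp [hp]⟩
    · have hd0 : a.val - b.val = k + 1 := by
        rw [← Nat.dist_eq_sub_of_le_right hgt.le]; exact h
      have ha1 : a.val - 1 < n := lt_of_le_of_lt (Nat.sub_le _ _) a.isLt
      set a' : Fin n := ⟨a.val - 1, ha1⟩ with ha'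
      have hadj : (pathGraph n).Adj a a' := pathGraph_adj.mpr (Or.inr (by simp [ha']; omega))
      have hd : Nat.dist a'.val b.val = k := by
        have : b.val ≤ a'.val := by simp [ha']; omega
        rw [Nat.dist_eq_sub_of_le_right this]; simp [ha']; omega
      obtain ⟨p, hp⟩ := ih a' b hd
      exact ⟨SimpleGraph.Walk.cons hadj p, by simp [hp]⟩

lemma myAdjDist {n : ℕ} {a b : Fin n} (h : (pathGraph n).Adj a b) :
    Nat.dist a.val b.val = 1 := by
  rcases pathGraph_adj.mp h with h1 | h1
  · rw [Nat.dist_eq_sub_of_le (by omega)]; omega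
  · rw [Nat.dist_eq_sub_of_le_right (by omega)]; omega

lemma myWalkLower {m n : ℕ} {u v : Fin m × Fin n}
    (p : (pathGraph m □ pathGraph n).Walk u v) :
    Nat.dist u.1.val v.1.val + Nat.dist u.2.val v.2.val ≤ p.length := by
  induction p with
  | nil => simp [Nat.dist_self]
  | @cons u w v h p ih =>
    rw [SimpleGraph.Walk.length_cons]
    have t1 := Nat.dist.triangle_inequality u.1.val w.1.val v.1.val
    have t2 := Nat.dist.triangle_inequality u.2.val w.2.val v.2.val
    rcases boxProd_adj.mp h with ⟨ha, he⟩ | ⟨ha, he⟩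
    · have h1 := myAdjDist ha
      have h2 : Nat.dist u.2.val v.2.val = Nat.dist w.2.val v.2.val := by rw [he]
      omega
    · have h1 := myAdjDist ha
      have h2 : Nat.dist u.1.val v.1.val = Nat.dist w.1.val v.1.val := by rw [he]
      omega

lemma myPathConnected {n : ℕ} (hn : 0 < n) : (pathGraph n).Connected := by
  cases n with
  | zero => omega
  | succ k => exact pathGraph_connected k

lemma myGridDist {m n : ℕ} (hm : 0 < m) (hn : 0 < n) (u v : Fin m × Fin n) :
    (pathGraph m □ pathGraph n).dist u v
      = Nat.dist u.1.val v.1.val + Nat.dist u.2.val v.2.val := by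
  apply le_antisymm
  · obtain ⟨p1, hp1⟩ := myPathWalk (Nat.dist u.1.val v.1.val) u.1 v.1 rfl
    obtain ⟨p2, hp2⟩ := myPathWalk (Nat.dist u.2.val v.2.val) u.2 v.2 rfl
    let q1 : (pathGraph m □ pathGraph n).Walk (u.1, u.2) (v.1, u.2) :=
      SimpleGraph.Walk.boxProdLeft (pathGraph n) u.2 p1
    let q2 : (pathGraph m □ pathGraph n).Walk (v.1, u.2) (v.1, v.2) :=
      SimpleGraph.Walk.boxProdRight (pathGraph m) v.1 p2
    have hq : (q1.append q2).length = Nat.dist u.1.val v.1.val + Nat.dist u.2.val v.2.val := by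
      rw [SimpleGraph.Walk.length_append]
      simp only [q1, q2, SimpleGraph.Walk.boxProdLeft, SimpleGraph.Walk.boxProdRight,
        SimpleGraph.Walk.length_map, hp1, hp2]
      erw [SimpleGraph.Walk.length_map, SimpleGraph.Walk.length_map, hp1, hp2]
    calc (pathGraph m □ pathGraph n).dist u v
        = (pathGraph m □ pathGraph n).dist (u.1, u.2) (v.1, v.2) := by simp
      _ ≤ (q1.append q2).length := SimpleGraph.dist_le _
      _ = _ := hq
  · have hconn : (pathGraph m □ pathGraph n).Connected :=
      SimpleGraph.Connected.boxProd (myPathConnected hm) (myPathConnected hn)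
    obtain ⟨p, hp⟩ := hconn.exists_walk_length_eq_dist u v
    rw [← hp]
    exact myWalkLower p

/-- For `1 ≤ m ≤ n` with `n ≥ 2`, `Γ_b(P_m □ P_n) ≥ m * (n - 1)`. -/
theorem grid_upperBroadcast_ge (m n : ℕ) (hm : 1 ≤ m) (hmn : m ≤ n) (hn : 2 ≤ n) :
    m * (n - 1) ≤ upperBroadcast (pathGraph m □ pathGraph n) := by
  classical
  set G := pathGraph m □ pathGraph n with hG
  have hn0 : 0 < n := by omega
  have hdist := myGridDist (m := m) (n := n) hm hn0
  set f : Fin m × Fin n → ℕ := fun v => if v.2.val = 0 then n - 1 else 0 with hf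
  have hbr : IsBroadcast G f := by
    intro v
    by_cases h0 : v.2.val = 0
    · have hle : G.dist v (v.1, ⟨n-1, by omega⟩) = n - 1 := by
        rw [hdist]; simp [Nat.dist_self, h0, Nat.dist]
      calc f v = n - 1 := by simp [hf, h0]
        _ = G.dist v (v.1, ⟨n-1, by omega⟩) := hle.symm
        _ ≤ _root_.eccent G v := Finset.le_sup (Finset.mem_univ _)
    · simp [hf, h0]
  have hdom : BroadcastDominates G f := by
    intro u
    refine ⟨(u.1, ⟨0, by omega⟩), ?_, ?_⟩
    · simp [hf]; omega
    · rw [hdist]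
      have : f (u.1, ⟨0, by omega⟩) = n - 1 := by simp [hf]
      rw [this]
      simp [Nat.dist_self, Nat.dist]
      omega
  have hmin : ∀ g : Fin m × Fin n → ℕ, IsBroadcast G g → g ≤ f → g ≠ f →
      ¬ BroadcastDominates G g := by
    intro g _ hle hne hdomg
    obtain ⟨w, hw⟩ : ∃ w, g w ≠ f w := by
      by_contra hc; push_neg at hc; exact hne (funext hc)
    have hwlt : g w < f w := lt_of_le_of_ne (hle w) hw
    have hw0 : w.2.val = 0 := by
      by_contra hc; simp [hf, hc] at hwlt
    have hwf : f w = n - 1 := by simp [hf, hw0]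
    obtain ⟨v, hv1, hv2⟩ := hdomg (w.1, ⟨n - 1, by omega⟩)
    have hvf : 1 ≤ f v := le_trans hv1 (hle v)
    have hv0 : v.2.val = 0 := by
      by_contra hc; simp [hf, hc] at hvf
    rw [hdist] at hv2
    have hd2 : Nat.dist (n-1) v.2.val = n - 1 := by rw [hv0]; simp [Nat.dist]
    have hv2' : Nat.dist w.1.val v.1.val + Nat.dist (n-1) v.2.val ≤ g v := by
      simpa using hv2
    by_cases hvw : v.1 = w.1
    · have hvw' : v = w := Prod.ext hvw (Fin.ext (by rw [hv0, hw0]))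
      rw [hvw'] at hv2'
      simp [Nat.dist_self] at hv2'
      have hd2w : Nat.dist (n-1) w.2.val = n - 1 := by rw [hw0]; simp [Nat.dist]
      omega
    · have : 1 ≤ Nat.dist w.1.val v.1.val :=
        Nat.dist_pos_of_ne (fun h => hvw (Fin.ext h.symm))
      have hfv2 : f v ≤ n - 1 := by simp [hf, hv0]
      have hgf : g v ≤ f v := hle v
      omega
  have hcost : cost f = m * (n - 1) := by
    rw [cost, Fintype.sum_prod_type]
    have hz : ∀ i : Fin m, (∑ j : Fin n, f (i, j)) = n - 1 := by
      intro i
      have : ∀ j : Fin n, f (i, j) = if j = (⟨0, by omega⟩ : Fin n) then n - 1 else 0 := by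
        intro j
        simp only [hf]
        congr 1
        simp [Fin.ext_iff]
      simp only [this]
      rw [Finset.sum_ite_eq' Finset.univ]
      simp
    simp [hz, Finset.sum_const]
  have hmem : m * (n - 1) ∈
      {k : ℕ | ∃ f : Fin m × Fin n → ℕ, MinimalDominatingBroadcast G f ∧ cost f = k} :=
    ⟨f, ⟨hbr, hdom, hmin⟩, hcost⟩
  have hbdd : BddAbove
      {k : ℕ | ∃ f : Fin m × Fin n → ℕ, MinimalDominatingBroadcast G f ∧ cost f = k} := by
    refine ⟨∑ v, eccent G v, ?_⟩
    rintro k ⟨g, ⟨hg, _, _⟩, rfl⟩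
    exact Finset.sum_le_sum fun v _ => hg v
  exact le_csSup hbdd hmem
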